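/- The snake/zig-zag identity holds in combinatorial 2-Cob: for a finite set n, let η be the cobordism from ∅ to n ⊔ n with component set n, both copies of n mapping identically, and genus 0; and let ε be the dual cobordism from n ⊔ n to ∅. Then the composite (id ⊗ ε)(η ⊗ id): n → n (appropriately bracketed) is the identity cobordism on n: its component set is in bijection with n with both structure maps being this bijection, and its genus function is identically zero. -/

import Mathlib

open scoped Classical

/-- The relation generating the pushout of a span `A ← k → B` of (finite) sets. -/
def PRel {k A B : Type} (f : k → A) (g : k → B) : A ⊕ B → A ⊕ B → Prop :=
  fun x y => ∃ z, x = Sum.inl (f z) ∧ y = Sum.inr (g z)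

/-- The pushout of the span `A ← k → B`. -/
def Pushout {k A B : Type} (f : k → A) (g : k → B) : Type :=
  Quot (PRel f g)

/-- Canonical map `ι_A : A → A ⊔_k B`. -/
def pInl {k A B : Type} (f : k → A) (g : k → B) (a : A) : Pushout f g :=
  Quot.mk _ (Sum.inl a)

/-- Canonical map `ι_B : B → A ⊔_k B`. -/
def pInr {k A B : Type} (f : k → A) (g : k → B) (b : B) : Pushout f g :=
  Quot.mk _ (Sum.inr b)

instance {k A B : Type} (f : k → A) (g : k → B) [Finite A] [Finite B] :
    Finite (Pushout f g) :=
  Quot.finite _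

noncomputable instance {k A B : Type} (f : k → A) (g : k → B) [Fintype A] [Fintype B] :
    Fintype (Pushout f g) :=
  Fintype.ofFinite _

/-- The genus formula of Definition 3.4:
`g(x) = 1 + Σ_{ι_A(a)=x}(g₁(a)−1) + Σ_{ι_B(b)=x}(g₂(b)−1) + #{y ∈ k : y ↦ x}`. -/
noncomputable def compGenus {k A B : Type} [Fintype k] [Fintype A] [Fintype B]
    (f : k → A) (g : k → B) (g1 : A → ℤ) (g2 : B → ℤ) (x : Pushout f g) : ℤ :=
  1 + (∑ a ∈ Finset.univ.filter (fun a => pInl f g a = x), (g1 a - 1))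
    + (∑ b ∈ Finset.univ.filter (fun b => pInr f g b = x), (g2 b - 1))
    + ((Finset.univ.filter (fun y : k => pInl f g (f y) = x)).card : ℤ)

/-- A combinatorial 2-cobordism from the finite set `m` to the finite set `n`. -/
structure Cob (m n : Type) : Type 1 where
  C : Type
  [fin : Fintype C]
  lm : m → C
  ln : n → C
  g : C → ℕ

attribute [instance] Cob.fin

/-- Composition of combinatorial 2-cobordisms via pushout of component sets
and the genus formula of Definition 3.4. -/
noncomputable def Cob.comp {m k n : Type} [Fintype k] (ψ : Cob k n) (φ : Cob m k) :
    Cob m n where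
  C := Pushout φ.ln ψ.lm
  lm := fun x => pInl φ.ln ψ.lm (φ.lm x)
  ln := fun y => pInr φ.ln ψ.lm (ψ.ln y)
  g := fun x =>
    (compGenus φ.ln ψ.lm (fun a => (φ.g a : ℤ)) (fun b => (ψ.g b : ℤ)) x).toNat

/-- Equivalence of combinatorial 2-cobordisms: a bijection of component sets
intertwining the structure maps and the genus functions. -/
def Cob.Equiv {m n : Type} (φ φ' : Cob m n) : Prop :=
  ∃ χ : φ.C ≃ φ'.C,
    (∀ x, χ (φ.lm x) = φ'.lm x) ∧ (∀ y, χ (φ.ln y) = φ'.ln y) ∧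
    (∀ c, φ'.g (χ c) = φ.g c)

/-- A cofibration: `l_n` is injective and `l_n` lifts through `l_m`. -/
def Cob.IsCofib {m n : Type} (φ : Cob m n) : Prop :=
  Function.Injective φ.ln ∧ ∃ u : n → m, ∀ y, φ.lm (u y) = φ.ln y

/-- A fibration: `l_m` is injective, `l_n` is surjective, and `g ∘ l_m = 0`. -/
def Cob.IsFib {m n : Type} (φ : Cob m n) : Prop :=
  Function.Injective φ.lm ∧ Function.Surjective φ.ln ∧ ∀ x, φ.g (φ.lm x) = 0

/-- The five local conditions of Definition 5.2.1 defining an oriented 1-cobordism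
between signed finite sets (signs recorded by Boolean functions, `true` = `+`). -/
def IsOriented {m n C : Type} (sm : m → Bool) (sn : n → Bool)
    (lm : m → C) (ln : n → C) : Prop :=
  ∀ c : C,
    (∃ a b : m, sm a = true ∧ sm b = false ∧ a ≠ b ∧
      (∀ x, lm x = c ↔ (x = a ∨ x = b)) ∧ (∀ y, ln y ≠ c)) ∨
    (∃ a b : n, sn a = true ∧ sn b = false ∧ a ≠ b ∧
      (∀ y, ln y = c ↔ (y = a ∨ y = b)) ∧ (∀ x, lm x ≠ c)) ∨
    (∃ a : m, ∃ b : n, sm a = sn b ∧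
      (∀ x, lm x = c ↔ x = a) ∧ (∀ y, ln y = c ↔ y = b)) ∨
    ((∀ x, lm x ≠ c) ∧ (∀ y, ln y ≠ c))

/-- The cobordism `η ⊗ id : n → n ⊔ n ⊔ n` with component set `2n`,
`a(x) = x`, `b(x,1) = x`, `b(x,2) = b(x,3) = x + n`, genus `0`. -/
def cupId (n : ℕ) : Cob (Fin n) (Fin n ⊕ (Fin n ⊕ Fin n)) where
  C := Fin n ⊕ Fin n
  lm := Sum.inl
  ln := Sum.elim Sum.inl (Sum.elim Sum.inr Sum.inr)
  g := fun _ => 0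

/-- The cobordism `id ⊗ ε : n ⊔ n ⊔ n → n` with component set `2n`,
`c(x,3) = x`, `c(x,1) = c(x,2) = x + n`, `d(x) = x`, genus `0`. -/
def idCap (n : ℕ) : Cob (Fin n ⊕ (Fin n ⊕ Fin n)) (Fin n) where
  C := Fin n ⊕ Fin n
  lm := Sum.elim Sum.inr (Sum.elim Sum.inr Sum.inl)
  ln := Sum.inl
  g := fun _ => 0

/-- The identity cobordism. -/
def Cob.idCob (n : Type) [Fintype n] : Cob n n where
  C := n
  lm := fun x => x
  ln := fun x => x
  g := fun _ => 0


namespace Snake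

variable {n : ℕ}

/-- The left leg of the span. -/
abbrev F (n : ℕ) : (Fin n ⊕ (Fin n ⊕ Fin n)) → (Fin n ⊕ Fin n) :=
  Sum.elim Sum.inl (Sum.elim Sum.inr Sum.inr)

/-- The right leg of the span. -/
abbrev G (n : ℕ) : (Fin n ⊕ (Fin n ⊕ Fin n)) → (Fin n ⊕ Fin n) :=
  Sum.elim Sum.inr (Sum.elim Sum.inr Sum.inl)

lemma eq1 (x : Fin n) :
    pInl (F n) (G n) (Sum.inl x) = pInr (F n) (G n) (Sum.inr x) :=
  Quot.sound ⟨Sum.inl x, rfl, rfl⟩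

lemma eq2 (x : Fin n) :
    pInl (F n) (G n) (Sum.inr x) = pInr (F n) (G n) (Sum.inr x) :=
  Quot.sound ⟨Sum.inr (Sum.inl x), rfl, rfl⟩

lemma eq3 (x : Fin n) :
    pInl (F n) (G n) (Sum.inr x) = pInr (F n) (G n) (Sum.inl x) :=
  Quot.sound ⟨Sum.inr (Sum.inr x), rfl, rfl⟩

/-- The projection of the pushout onto `Fin n`. -/
def proj (n : ℕ) : Pushout (F n) (G n) → Fin n :=
  Quot.lift (Sum.elim (Sum.elim id id) (Sum.elim id id)) (by
    rintro _ _ ⟨z, rfl, rfl⟩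
    rcases z with x | x | x <;> rfl)

/-- The section of the projection. -/
def sec (n : ℕ) (x : Fin n) : Pushout (F n) (G n) :=
  pInl (F n) (G n) (Sum.inl x)

lemma proj_sec (x : Fin n) : proj n (sec n x) = x := rfl

lemma sec_proj (c : Pushout (F n) (G n)) : sec n (proj n c) = c := by
  induction c using Quot.ind with
  | _ w =>
    rcases w with (x | x) | (x | x)
    · rfl
    · exact (eq1 x).trans (eq2 x).symm
    · exact ((eq1 x).trans (eq2 x).symm).trans (eq3 x)
    · exact eq1 x

lemma pInl_eq_sec (a : Fin n ⊕ Fin n) (x : Fin n) :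
    pInl (F n) (G n) a = sec n x ↔ Sum.elim id id a = x := by
  constructor
  · intro h
    have := congrArg (proj n) h
    rcases a with a | a <;> simpa [proj, sec, pInl] using this
  · rintro rfl
    rcases a with a | a
    · rfl
    · exact ((eq2 a).trans (eq1 a).symm)

lemma pInr_eq_sec (b : Fin n ⊕ Fin n) (x : Fin n) :
    pInr (F n) (G n) b = sec n x ↔ Sum.elim id id b = x := by
  constructor
  · intro h
    have := congrArg (proj n) h
    rcases b with b | b <;> simpa [proj, sec, pInr, pInl] using this
  · rintro rfl
    rcases b with b | b
    · exact (eq3 b).symm.trans ((eq2 b).trans (eq1 b).symm)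
    · exact (eq1 b).symm

lemma filterA (x : Fin n) :
    Finset.univ.filter (fun a : Fin n ⊕ Fin n => pInl (F n) (G n) a = sec n x)
      = {Sum.inl x, Sum.inr x} := by
  ext a
  simp only [Finset.mem_filter, Finset.mem_univ, true_and, pInl_eq_sec,
    Finset.mem_insert, Finset.mem_singleton]
  rcases a with a | a <;> simp [eq_comm]

lemma filterB (x : Fin n) :
    Finset.univ.filter (fun b : Fin n ⊕ Fin n => pInr (F n) (G n) b = sec n x)
      = {Sum.inl x, Sum.inr x} := by
  ext b
  simp only [Finset.mem_filter, Finset.mem_univ, true_and, pInr_eq_sec,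
    Finset.mem_insert, Finset.mem_singleton]
  rcases b with b | b <;> simp [eq_comm]

lemma filterK (x : Fin n) :
    Finset.univ.filter
        (fun y : Fin n ⊕ (Fin n ⊕ Fin n) => pInl (F n) (G n) (F n y) = sec n x)
      = {Sum.inl x, Sum.inr (Sum.inl x), Sum.inr (Sum.inr x)} := by
  ext y
  simp only [Finset.mem_filter, Finset.mem_univ, true_and, pInl_eq_sec,
    Finset.mem_insert, Finset.mem_singleton]
  rcases y with y | y | y <;> simp [eq_comm]

lemma genus_zero (x : Fin n) :
    compGenus (F n) (G n) (fun _ => (0 : ℤ)) (fun _ => (0 : ℤ)) (sec n x) = 0 := by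
  rw [compGenus, filterA, filterB, filterK]
  rw [Finset.sum_pair (by simp : (Sum.inl x : Fin n ⊕ Fin n) ≠ Sum.inr x)]
  rw [Finset.card_insert_of_notMem (by simp), Finset.card_insert_of_notMem (by simp),
    Finset.card_singleton]
  ring

end Snake

/-- snake identity, Proposition 5.3.3: the composite
`(id ⊗ ε)(η ⊗ id) : n → n` is the identity cobordism on `n`. -/
theorem stmt_12 (n : ℕ) :
    Cob.Equiv (Cob.comp (idCap n) (cupId n)) (Cob.idCob (Fin n)) := by
  refine ⟨⟨Snake.proj n, Snake.sec n, Snake.sec_proj, Snake.proj_sec⟩, ?_, ?_, ?_⟩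
  · intro x; rfl
  · intro y; rfl
  · intro c
    show (0 : ℕ) = _
    have hc : c = Snake.sec n (Snake.proj n c) := (Snake.sec_proj c).symm
    rw [hc]
    show 0 = (compGenus (Snake.F n) (Snake.G n) (fun _ => (0:ℤ)) (fun _ => (0:ℤ))
      (Snake.sec n (Snake.proj n c))).toNat
    rw [Snake.genus_zero]
    rfl
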